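/- If the vanishing ideal I(K)_A = {0} (no nonzero polynomial in ℝ[x]_A vanishes identically on K), then the truncated moment cone R_A(K) has nonempty interior in ℝ^A. -/

import Mathlib

open MeasureTheory Finset

/-- The monomial `x^α` for an exponent vector `α : Fin n → ℕ`. -/
noncomputable def mono {n : ℕ} (α : Fin n → ℕ) (x : Fin n → ℝ) : ℝ := ∏ i, x i ^ α i

/-- The polynomial with coefficient vector `c` supported on the finite power set `A`. -/
noncomputable def polyA {n : ℕ} (A : Finset (Fin n → ℕ)) (c : A → ℝ) (x : Fin n → ℝ) : ℝ :=
  ∑ α : A, c α * mono (α : Fin n → ℕ) x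

/-- The truncated moment cone `R_A(K)`: those `y ∈ ℝ^A` admitting a positive Borel
representing measure supported in `K`. -/
def momCone {n : ℕ} (A : Finset (Fin n → ℕ)) (K : Set (Fin n → ℝ)) : Set (A → ℝ) :=
  {y | ∃ μ : Measure (Fin n → ℝ), μ Kᶜ = 0 ∧
      (∀ α : A, Integrable (mono (α : Fin n → ℕ)) μ) ∧
      (∀ α : A, y α = ∫ x, mono (α : Fin n → ℕ) x ∂μ)}

/-- if no nonzero polynomial supported on `A` vanishes identically on `K`,
then the truncated moment cone `R_A(K)` has nonempty interior in `ℝ^A`. -/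
lemma mono_continuous {n : ℕ} (α : Fin n → ℕ) : Continuous (mono α) := by
  unfold mono
  exact continuous_finset_prod _ fun i _ => (continuous_apply i).pow _

theorem stmt6 {n : ℕ} (A : Finset (Fin n → ℕ)) (K : Set (Fin n → ℝ)) (hK : IsClosed K)
    (hne : K.Nonempty)
    (h : ∀ c : A → ℝ, (∀ x ∈ K, polyA A c x = 0) → c = 0) :
    (interior (momCone A K)).Nonempty := by
  classical
  set m : (Fin n → ℝ) → (A → ℝ) := fun x α => mono (α : Fin n → ℕ) x with hm
  -- Step 1: span of m '' K is top
  have hspan : Submodule.span ℝ (m '' K) = ⊤ := by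
    by_contra hlt
    obtain ⟨f, hf0, hfbot⟩ :=
      Submodule.exists_dual_map_eq_bot_of_lt_top (lt_top_iff_ne_top.2 hlt) inferInstance
    set c : A → ℝ := fun α => f (Pi.single α (1:ℝ)) with hc
    have hfc : ∀ v : A → ℝ, f v = ∑ α : A, c α * v α := by
      intro v
      have : v = ∑ α : A, v α • (Pi.single α (1:ℝ) : A → ℝ) := by
        ext β; simp [Finset.sum_apply, Pi.single_apply, mul_comm]
      calc f v = f (∑ α : A, v α • (Pi.single α (1:ℝ) : A → ℝ)) := by rw [← this]
        _ = ∑ α : A, v α * c α := by rw [map_sum]; simp [hc, smul_eq_mul]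
        _ = ∑ α : A, c α * v α := by simp [mul_comm]
    have hc0 : c = 0 := by
      apply h
      intro x hx
      have : f (m x) = 0 := by
        have : m x ∈ Submodule.span ℝ (m '' K) :=
          Submodule.subset_span ⟨x, hx, rfl⟩
        have := Submodule.mem_map_of_mem (f := f) this
        rw [hfbot] at this
        simpa using this
      rw [hfc] at this
      simpa [polyA, hm] using this
    apply hf0
    apply LinearMap.ext
    intro v
    rw [hfc v, hc0]
    simp
  -- Step 2: basis from spanning set
  obtain ⟨t, hts, htspan, htli⟩ := exists_linearIndependent ℝ (m '' K)
  rw [hspan] at htspan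
  let b : Module.Basis t ℝ (A → ℝ) := Module.Basis.mk htli (by rw [Subtype.range_coe, htspan])
  haveI : Fintype t := FiniteDimensional.fintypeBasisIndex b
  -- preimages
  have hx : ∀ v : t, ∃ x ∈ K, m x = v := fun v => by
    obtain ⟨x, hxK, hxv⟩ := hts v.2; exact ⟨x, hxK, hxv⟩
  choose xs hxsK hxsm using hx
  -- Step 3: the open set
  set U : Set (A → ℝ) := {v | ∀ i : t, 0 < b.equivFun v i} with hU
  have hUopen : IsOpen U := by
    have hcont : Continuous (b.equivFun : (A → ℝ) → (t → ℝ)) :=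
      LinearMap.continuous_of_finiteDimensional _
    have : U = ⋂ i : t, (fun v => b.equivFun v i) ⁻¹' Set.Ioi 0 := by
      ext v; simp [hU, Set.mem_iInter]
    rw [this]
    exact isOpen_iInter_of_finite fun i =>
      (isOpen_Ioi).preimage ((continuous_apply i).comp hcont)
  have hUne : U.Nonempty := by
    refine ⟨b.equivFun.symm (fun _ => 1), fun i => ?_⟩
    simp
  have hUsub : U ⊆ momCone A K := by
    intro y hy
    set c : t → ℝ := fun i => b.equivFun y i with hcdef
    have hcpos : ∀ i, 0 < c i := hy
    refine ⟨∑ i : t, (ENNReal.ofReal (c i)) • Measure.dirac (xs i), ?_, ?_, ?_⟩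
    · rw [Measure.coe_finset_sum]
      simp only [Finset.sum_apply, Measure.smul_apply, smul_eq_mul]
      apply Finset.sum_eq_zero
      intro i _
      rw [Measure.dirac_apply' _ hK.measurableSet.compl]
      simp [Set.indicator_of_notMem, hxsK i]
    · intro α
      rw [integrable_finset_sum_measure]
      intro i _
      apply Integrable.smul_measure
      · exact (integrable_const _).congr (ae_eq_dirac (mono (α : Fin n → ℕ))).symm
      · exact ENNReal.ofReal_ne_top
    · intro α
      have hint : ∀ i : t, Integrable (mono (α : Fin n → ℕ))
          ((ENNReal.ofReal (c i)) • Measure.dirac (xs i)) := by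
        intro i
        apply Integrable.smul_measure _ ENNReal.ofReal_ne_top
        exact (integrable_const _).congr (ae_eq_dirac (mono (α : Fin n → ℕ))).symm
      rw [integral_finset_sum_measure (fun i _ => hint i)]
      have : ∀ i : t, ∫ x, mono (α : Fin n → ℕ) x ∂((ENNReal.ofReal (c i)) • Measure.dirac (xs i))
          = c i * mono (α : Fin n → ℕ) (xs i) := by
        intro i
        rw [integral_smul_measure, integral_dirac, ENNReal.toReal_ofReal (hcpos i).le,
          smul_eq_mul]
      simp_rw [this]
      have hrep : y = ∑ i : t, c i • (b i) := (b.sum_equivFun y).symm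
      calc y α = (∑ i : t, c i • (b i)) α := by rw [← hrep]
        _ = ∑ i : t, c i * (b i) α := by simp [Finset.sum_apply]
        _ = ∑ i : t, c i * mono (α : Fin n → ℕ) (xs i) := by
            refine Finset.sum_congr rfl fun i _ => ?_
            have : (b i : A → ℝ) = m (xs i) := by rw [hxsm i, Module.Basis.mk_apply]
            rw [this]
  obtain ⟨v, hv⟩ := hUne
  exact ⟨v, interior_maximal hUsub hUopen hv⟩
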